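/- There exists a generic even-odd metric space: an even-odd metric space (U, d) on a countable nonempty type such that (i) every countable even-odd metric space admits a distance-preserving injective map into U, and (ii) every distance-preserving bijection between two finite subsets of U extends to a distance-preserving bijection of U onto itself. -/

import Mathlib

universe u

/-- An even-odd pair: the first component is `⊤` or an even natural number, the second
is `⊤` or an odd natural number (as elements of `ℕ∞`). -/
def IsEOPair (p : ℕ∞ × ℕ∞) : Prop :=
  (p.1 = ⊤ ∨ ∃ n : ℕ, p.1 = (n : ℕ∞) ∧ Even n) ∧
  (p.2 = ⊤ ∨ ∃ n : ℕ, p.2 = (n : ℕ∞) ∧ Odd n)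

/-- Sum of even-odd pairs: `(a,b) + (c,d) = (min(a+c, b+d), min(a+d, b+c))`. -/
noncomputable def eoAdd (p q : ℕ∞ × ℕ∞) : ℕ∞ × ℕ∞ :=
  (min (p.1 + q.1) (p.2 + q.2), min (p.1 + q.2) (p.2 + q.1))

/-- Componentwise order on even-odd pairs. -/
def eoLe (p q : ℕ∞ × ℕ∞) : Prop := p.1 ≤ q.1 ∧ p.2 ≤ q.2

/-- An even-odd metric space: a distance function with values in even-odd pairs,
whose first component vanishes exactly on the diagonal, which is symmetric and
satisfies the triangle inequality. -/
structure IsEOMetric (S : Type*) (d : S → S → ℕ∞ × ℕ∞) : Prop where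
  isEO : ∀ x y, IsEOPair (d x y)
  fst_eq_zero_iff : ∀ x y, (d x y).1 = 0 ↔ x = y
  symm : ∀ x y, d x y = d y x
  triangle : ∀ x y z, eoLe (d x z) (eoAdd (d x y) (d y z))

/-! ### auxiliary algebra -/


abbrev EOP := ℕ∞ × ℕ∞

def EvE (x : ℕ∞) : Prop := x = ⊤ ∨ ∃ n : ℕ, x = (n : ℕ∞) ∧ Even n
def OdE (x : ℕ∞) : Prop := x = ⊤ ∨ ∃ n : ℕ, x = (n : ℕ∞) ∧ Odd n

lemma isEOPair_iff {p : EOP} : IsEOPair p ↔ EvE p.1 ∧ OdE p.2 := Iff.rfl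

lemma EvE.top : EvE ⊤ := Or.inl rfl
lemma OdE.top : OdE ⊤ := Or.inl rfl
lemma EvE.zero : EvE 0 := Or.inr ⟨0, by simp⟩
lemma OdE.one : OdE 1 := Or.inr ⟨1, by simp⟩

lemma EvE.add {x y : ℕ∞} (hx : EvE x) (hy : EvE y) : EvE (x + y) := by
  rcases hx with rfl | ⟨n, rfl, hn⟩
  · exact Or.inl (by simp)
  rcases hy with rfl | ⟨m, rfl, hm⟩
  · exact Or.inl (by simp)
  · exact Or.inr ⟨n + m, by push_cast; simp, hn.add hm⟩

lemma OdE.add_od {x y : ℕ∞} (hx : OdE x) (hy : OdE y) : EvE (x + y) := by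
  rcases hx with rfl | ⟨n, rfl, hn⟩
  · exact Or.inl (by simp)
  rcases hy with rfl | ⟨m, rfl, hm⟩
  · exact Or.inl (by simp)
  · exact Or.inr ⟨n + m, by push_cast; simp, hn.add_odd hm⟩

lemma EvE.add_od {x y : ℕ∞} (hx : EvE x) (hy : OdE y) : OdE (x + y) := by
  rcases hx with rfl | ⟨n, rfl, hn⟩
  · exact Or.inl (by simp)
  rcases hy with rfl | ⟨m, rfl, hm⟩
  · exact Or.inl (by simp)
  · exact Or.inr ⟨n + m, by push_cast; simp, hn.add_odd hm⟩

lemma OdE.add_ev {x y : ℕ∞} (hx : OdE x) (hy : EvE y) : OdE (x + y) := by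
  rw [add_comm]; exact hy.add_od hx

lemma EvE.min {x y : ℕ∞} (hx : EvE x) (hy : EvE y) : EvE (min x y) := by
  rcases le_total x y with h | h
  · rwa [min_eq_left h]
  · rwa [min_eq_right h]

lemma OdE.min {x y : ℕ∞} (hx : OdE x) (hy : OdE y) : OdE (min x y) := by
  rcases le_total x y with h | h
  · rwa [min_eq_left h]
  · rwa [min_eq_right h]

lemma OdE.ne_zero {x : ℕ∞} (hx : OdE x) : x ≠ 0 := by
  rcases hx with rfl | ⟨n, rfl, hn⟩
  · simp
  · obtain ⟨k, rfl⟩ := hn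
    simp [Nat.cast_add]

lemma eoAdd_isEO {p q : EOP} (hp : IsEOPair p) (hq : IsEOPair q) : IsEOPair (eoAdd p q) :=
  ⟨EvE.min (EvE.add hp.1 hq.1) (OdE.add_od hp.2 hq.2), OdE.min (EvE.add_od hp.1 hq.2) (OdE.add_ev hp.2 hq.1)⟩

lemma eoLe_iff {p q : EOP} : eoLe p q ↔ p ≤ q := by
  rw [eoLe, Prod.le_def]

lemma nadd_min (a b c : ℕ∞) : a + min b c = min (a + b) (a + c) := by
  rcases le_total b c with h | h
  · simp [min_eq_left h, min_eq_left (add_le_add (le_refl a) h)]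
  · simp [min_eq_right h, min_eq_right (add_le_add (le_refl a) h)]

lemma nmin_add (a b c : ℕ∞) : min a b + c = min (a + c) (b + c) := by
  rw [add_comm, nadd_min, add_comm a, add_comm b]

lemma eoAdd_comm (p q : EOP) : eoAdd p q = eoAdd q p := by
  simp only [eoAdd, Prod.mk.injEq]
  constructor
  · rw [add_comm, add_comm p.2, min_comm]
  · rw [add_comm, add_comm p.2, min_comm]

lemma eoAdd_assoc (p q r : EOP) : eoAdd (eoAdd p q) r = eoAdd p (eoAdd q r) := by
  simp only [eoAdd, Prod.mk.injEq, nmin_add, nadd_min, ← add_assoc]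
  constructor
  · rw [min_min_min_comm]
    congr 1
    rw [min_comm]
  · rw [min_min_min_comm]
    congr 1
    rw [min_comm]

lemma eoAdd_mono {p p' q q' : EOP} (hp : p ≤ p') (hq : q ≤ q') : eoAdd p q ≤ eoAdd p' q' := by
  rcases hp with ⟨h1, h2⟩; rcases hq with ⟨h3, h4⟩
  constructor
  · exact min_le_min (add_le_add h1 h3) (add_le_add h2 h4)
  · exact min_le_min (add_le_add h1 h4) (add_le_add h2 h3)

lemma eoAdd_mono_right {p q q' : EOP} (hq : q ≤ q') : eoAdd p q ≤ eoAdd p q' :=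
  eoAdd_mono le_rfl hq

lemma eoAdd_min_right (p q r : EOP) : eoAdd p (q ⊓ r) = eoAdd p q ⊓ eoAdd p r := by
  rw [Prod.ext_iff]
  constructor
  · show min (p.1 + min q.1 r.1) (p.2 + min q.2 r.2) =
      min (min (p.1 + q.1) (p.2 + q.2)) (min (p.1 + r.1) (p.2 + r.2))
    rw [nadd_min, nadd_min, min_min_min_comm]
  · show min (p.1 + min q.2 r.2) (p.2 + min q.1 r.1) =
      min (min (p.1 + q.2) (p.2 + q.1)) (min (p.1 + r.2) (p.2 + r.1))
    rw [nadd_min, nadd_min, min_min_min_comm]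

lemma eoAdd_inf_right (p : EOP) (A : Finset ℕ) (q : ℕ → EOP) :
    eoAdd p (A.inf q) = A.inf fun a => eoAdd p (q a) := by
  induction A using Finset.induction_on with
  | empty =>
      simp only [Finset.inf_empty]
      show eoAdd p (⊤, ⊤) = (⊤, ⊤)
      simp [eoAdd]
  | insert _ _ h ih =>
      rw [Finset.inf_insert, Finset.inf_insert, eoAdd_min_right, ih]

lemma eoAdd_inf_left (A : Finset ℕ) (q : ℕ → EOP) (p : EOP) :
    eoAdd (A.inf q) p = A.inf fun a => eoAdd (q a) p := by
  rw [eoAdd_comm, eoAdd_inf_right]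
  simp [eoAdd_comm]

lemma inf_fst (A : Finset ℕ) (q : ℕ → EOP) : (A.inf q).1 = A.inf fun a => (q a).1 := by
  induction A using Finset.induction_on with
  | empty => rfl
  | insert _ _ h ih => rw [Finset.inf_insert, Finset.inf_insert, ← ih]; rfl

lemma inf_isEO {A : Finset ℕ} {q : ℕ → EOP} (h : ∀ a ∈ A, IsEOPair (q a)) :
    IsEOPair (A.inf q) := by
  induction A using Finset.induction_on with
  | empty => exact ⟨EvE.top, OdE.top⟩
  | @insert a s ha ih =>
      rw [Finset.inf_insert]
      have h1 := h a (Finset.mem_insert_self a s)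
      have h2 := ih fun b hb => h b (Finset.mem_insert_of_mem hb)
      exact ⟨EvE.min h1.1 h2.1, OdE.min h1.2 h2.2⟩

instance : Std.Associative eoAdd := ⟨eoAdd_assoc⟩
instance : Std.Commutative eoAdd := ⟨eoAdd_comm⟩

lemma min_eq_zero' {x y : ℕ∞} (h : min x y = 0) : x = 0 ∨ y = 0 := by
  rcases le_total x y with hh | hh
  · left; rwa [min_eq_left hh] at h
  · right; rwa [min_eq_right hh] at h

lemma addne {x y : ℕ∞} (hx : x ≠ 0) : x + y ≠ 0 := fun h => hx (add_eq_zero.mp h).1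

/-- metric axioms restricted to a predicate -/
structure EOMOn (D : ℕ → ℕ → EOP) (P : ℕ → Prop) : Prop where
  isEO : ∀ x, P x → ∀ y, P y → IsEOPair (D x y)
  fst : ∀ x, P x → ∀ y, P y → ((D x y).1 = 0 ↔ x = y)
  symm : ∀ x, P x → ∀ y, P y → D x y = D y x
  tri : ∀ x, P x → ∀ y, P y → ∀ z, P z → D x z ≤ eoAdd (D x y) (D y z)

/-- compatibility conditions for a one-point extension -/
structure ExtCompat (D : ℕ → ℕ → EOP) (P : ℕ → Prop) (g : ℕ → EOP) (c : ℕ∞) : Prop where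
  codd : OdE c
  iseo : ∀ a, P a → IsEOPair (g a)
  gne : ∀ a, P a → (g a).1 ≠ 0
  t1 : ∀ a, P a → ∀ b, P b → D a b ≤ eoAdd (g a) (g b)
  t2 : ∀ a, P a → ∀ b, P b → g b ≤ eoAdd (g a) (D a b)
  t3 : ∀ a, P a → (((0:ℕ∞), c) : EOP) ≤ eoAdd (g a) (g a)
  t4 : ∀ a, P a → g a ≤ eoAdd (((0:ℕ∞), c) : EOP) (g a)

noncomputable def glue (D : ℕ → ℕ → EOP) (A : Finset ℕ) (g : ℕ → EOP) : ℕ → EOP :=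
  fun j => if j ∈ A then g j else A.inf fun a => eoAdd (g a) (D a j)

lemma glue_mem {D A g} {a : ℕ} (ha : a ∈ A) : glue D A g a = g a := if_pos ha

lemma amalg {D : ℕ → ℕ → EOP} {P : ℕ → Prop} {A : Finset ℕ} {g : ℕ → EOP} {c : ℕ∞}
    (hD : EOMOn D P) (hA : ∀ a ∈ A, P a) (hg : ExtCompat D (· ∈ A) g c) :
    ExtCompat D P (glue D A g) c := by
  constructor
  · exact hg.codd
  · intro j hj
    by_cases h : j ∈ A
    · simpa [glue, h] using hg.iseo j h
    · simp only [glue, if_neg h]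
      exact inf_isEO fun a ha => eoAdd_isEO (hg.iseo a ha) (hD.isEO a (hA a ha) j hj)
  · intro j hj
    by_cases h : j ∈ A
    · simpa [glue, h] using hg.gne j h
    · simp only [glue, if_neg h, inf_fst]
      intro h0
      obtain ⟨a, ha, hfa⟩ := Finset.inf_eq_bot_iff.mp h0
      have hfa' : min ((g a).1 + (D a j).1) ((g a).2 + (D a j).2) = 0 := hfa
      rcases min_eq_zero' hfa' with h1 | h1
      · exact addne (hg.gne a ha) h1
      · exact addne (OdE.ne_zero (hg.iseo a ha).2) h1
  · intro x hPx y hPy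
    by_cases hx : x ∈ A <;> by_cases hy : y ∈ A
    · simpa [glue, hx, hy] using hg.t1 x hx y hy
    · simp only [glue, if_pos hx, if_neg hy, eoAdd_inf_right]
      refine Finset.le_inf fun a ha => ?_
      calc D x y ≤ eoAdd (D x a) (D a y) := hD.tri x hPx a (hA a ha) y hPy
        _ ≤ eoAdd (eoAdd (g x) (g a)) (D a y) := eoAdd_mono (hg.t1 x hx a ha) le_rfl
        _ = eoAdd (g x) (eoAdd (g a) (D a y)) := eoAdd_assoc _ _ _
    · simp only [glue, if_neg hx, if_pos hy, eoAdd_inf_left]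
      refine Finset.le_inf fun a ha => ?_
      calc D x y ≤ eoAdd (D x a) (D a y) := hD.tri x hPx a (hA a ha) y hPy
        _ ≤ eoAdd (D x a) (eoAdd (g a) (g y)) := eoAdd_mono le_rfl (hg.t1 a ha y hy)
        _ = eoAdd (eoAdd (g a) (D x a)) (g y) := by ac_rfl
        _ = eoAdd (eoAdd (g a) (D a x)) (g y) := by rw [hD.symm x hPx a (hA a ha)]
    · simp only [glue, if_neg hx, if_neg hy, eoAdd_inf_left]
      refine Finset.le_inf fun a ha => ?_
      rw [eoAdd_inf_right]
      refine Finset.le_inf fun b hb => ?_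
      calc D x y ≤ eoAdd (D x a) (D a y) := hD.tri x hPx a (hA a ha) y hPy
        _ ≤ eoAdd (D x a) (eoAdd (D a b) (D b y)) :=
            eoAdd_mono_right (hD.tri a (hA a ha) b (hA b hb) y hPy)
        _ ≤ eoAdd (D x a) (eoAdd (eoAdd (g a) (g b)) (D b y)) :=
            eoAdd_mono_right (eoAdd_mono (hg.t1 a ha b hb) le_rfl)
        _ = eoAdd (eoAdd (g a) (D x a)) (eoAdd (g b) (D b y)) := by ac_rfl
        _ = eoAdd (eoAdd (g a) (D a x)) (eoAdd (g b) (D b y)) := by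
            rw [hD.symm x hPx a (hA a ha)]
  · intro x hPx y hPy
    by_cases hx : x ∈ A <;> by_cases hy : y ∈ A
    · simpa [glue, hx, hy] using hg.t2 x hx y hy
    · simp only [glue, if_pos hx, if_neg hy]
      exact Finset.inf_le hx
    · simp only [glue, if_neg hx, if_pos hy, eoAdd_inf_left]
      refine Finset.le_inf fun a ha => ?_
      calc g y ≤ eoAdd (g a) (D a y) := hg.t2 a ha y hy
        _ ≤ eoAdd (g a) (eoAdd (D a x) (D x y)) :=
            eoAdd_mono_right (hD.tri a (hA a ha) x hPx y hPy)
        _ = eoAdd (eoAdd (g a) (D a x)) (D x y) := (eoAdd_assoc _ _ _).symm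
    · simp only [glue, if_neg hx, if_neg hy, eoAdd_inf_left]
      refine Finset.le_inf fun a ha => ?_
      calc A.inf (fun a => eoAdd (g a) (D a y)) ≤ eoAdd (g a) (D a y) := Finset.inf_le ha
        _ ≤ eoAdd (g a) (eoAdd (D a x) (D x y)) :=
            eoAdd_mono_right (hD.tri a (hA a ha) x hPx y hPy)
        _ = eoAdd (eoAdd (g a) (D a x)) (D x y) := (eoAdd_assoc _ _ _).symm
  · intro a hPa
    by_cases h : a ∈ A
    · simpa [glue, h] using hg.t3 a h
    · simp only [glue, if_neg h, eoAdd_inf_left]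
      refine Finset.le_inf fun x hx => ?_
      rw [eoAdd_inf_right]
      refine Finset.le_inf fun y hy => ?_
      calc (((0:ℕ∞), c) : EOP) ≤ eoAdd (g x) (g x) := hg.t3 x hx
        _ ≤ eoAdd (g x) (eoAdd (g y) (D y x)) := eoAdd_mono_right (hg.t2 y hy x hx)
        _ ≤ eoAdd (g x) (eoAdd (g y) (eoAdd (D y a) (D a x))) :=
            eoAdd_mono_right (eoAdd_mono_right (hD.tri y (hA y hy) a hPa x (hA x hx)))
        _ = eoAdd (eoAdd (g x) (D a x)) (eoAdd (g y) (D y a)) := by ac_rfl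
        _ = eoAdd (eoAdd (g x) (D x a)) (eoAdd (g y) (D y a)) := by
            rw [hD.symm a hPa x (hA x hx)]
  · intro a hPa
    by_cases h : a ∈ A
    · simpa [glue, h] using hg.t4 a h
    · simp only [glue, if_neg h, eoAdd_inf_right]
      refine Finset.inf_mono_fun fun x hx => ?_
      calc eoAdd (g x) (D x a) ≤ eoAdd (eoAdd (((0:ℕ∞), c) : EOP) (g x)) (D x a) :=
            eoAdd_mono (hg.t4 x hx) le_rfl
        _ = eoAdd (((0:ℕ∞), c) : EOP) (eoAdd (g x) (D x a)) := eoAdd_assoc _ _ _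

noncomputable def addPt (D : ℕ → ℕ → EOP) (m : ℕ) (G : ℕ → EOP) (c : ℕ∞) : ℕ → ℕ → EOP :=
  fun i j =>
    if i = m then (if j = m then ((0:ℕ∞), c) else G j)
    else if j = m then G i else D i j

lemma addPt_old {D m G c} {i j : ℕ} (hi : i ≠ m) (hj : j ≠ m) : addPt D m G c i j = D i j := by
  simp [addPt, hi, hj]

lemma addPt_mm {D m G c} : addPt D m G c m m = ((0:ℕ∞), c) := by simp [addPt]

lemma addPt_mj {D m G c} {j : ℕ} (hj : j ≠ m) : addPt D m G c m j = G j := by simp [addPt, hj]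

lemma addPt_im {D m G c} {i : ℕ} (hi : i ≠ m) : addPt D m G c i m = G i := by simp [addPt, hi]

lemma cc_tri {c : ℕ∞} : (((0:ℕ∞), c) : EOP) ≤ eoAdd ((0:ℕ∞), c) ((0:ℕ∞), c) := by
  constructor <;> simp [eoAdd]

lemma addPt_metric {D : ℕ → ℕ → EOP} {m : ℕ} {G : ℕ → EOP} {c : ℕ∞}
    (hD : EOMOn D (· < m)) (hG : ExtCompat D (· < m) G c) :
    EOMOn (addPt D m G c) (· < m + 1) := by
  have hsplit : ∀ x : ℕ, x < m + 1 → x < m ∨ x = m := by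
    intro x hx; omega
  constructor
  · intro x hx y hy
    rcases hsplit x hx with hx' | rfl <;> rcases hsplit y hy with hy' | rfl
    · rw [addPt_old hx'.ne hy'.ne]; exact hD.isEO x hx' y hy'
    · rw [addPt_im hx'.ne]; exact hG.iseo x hx'
    · rw [addPt_mj hy'.ne]; exact hG.iseo y hy'
    · rw [addPt_mm]; exact ⟨EvE.zero, hG.codd⟩
  · intro x hx y hy
    rcases hsplit x hx with hx' | rfl <;> rcases hsplit y hy with hy' | rfl
    · rw [addPt_old hx'.ne hy'.ne]; exact hD.fst x hx' y hy'
    · rw [addPt_im hx'.ne]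
      simp only [hx'.ne, iff_false]
      exact hG.gne x hx'
    · rw [addPt_mj hy'.ne]
      simp only [hy'.ne', iff_false]
      exact hG.gne y hy'
    · rw [addPt_mm]; simp
  · intro x hx y hy
    rcases hsplit x hx with hx' | rfl <;> rcases hsplit y hy with hy' | rfl
    · rw [addPt_old hx'.ne hy'.ne, addPt_old hy'.ne hx'.ne]; exact hD.symm x hx' y hy'
    · rw [addPt_im hx'.ne, addPt_mj hx'.ne]
    · rw [addPt_mj hy'.ne, addPt_im hy'.ne]
    · rfl
  · intro x hx y hy z hz
    rcases hsplit x hx with hx' | rfl <;> rcases hsplit y hy with hy' | rfl <;>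
      rcases hsplit z hz with hz' | rfl
    · rw [addPt_old hx'.ne hz'.ne, addPt_old hx'.ne hy'.ne, addPt_old hy'.ne hz'.ne]
      exact hD.tri x hx' y hy' z hz'
    · rw [addPt_im hx'.ne, addPt_old hx'.ne hy'.ne, addPt_im hy'.ne]
      calc G x ≤ eoAdd (G y) (D y x) := hG.t2 y hy' x hx'
        _ = eoAdd (D x y) (G y) := by rw [hD.symm y hy' x hx']; exact eoAdd_comm _ _
    · rw [addPt_old hx'.ne hz'.ne, addPt_im hx'.ne, addPt_mj hz'.ne]
      exact hG.t1 x hx' z hz'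
    · rw [addPt_im hx'.ne, addPt_mm]
      calc G x ≤ eoAdd (((0:ℕ∞), c) : EOP) (G x) := hG.t4 x hx'
        _ = eoAdd (G x) ((0:ℕ∞), c) := eoAdd_comm _ _
    · rw [addPt_mj hz'.ne, addPt_mj hy'.ne, addPt_old hy'.ne hz'.ne]
      exact hG.t2 y hy' z hz'
    · rw [addPt_mm, addPt_mj hy'.ne, addPt_im hy'.ne]
      exact hG.t3 y hy'
    · rw [addPt_mj hz'.ne, addPt_mm]
      exact hG.t4 z hz'
    · rw [addPt_mm]
      exact cc_tri

/-! ### the construction -/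

noncomputable def tasks : ℕ → List EOP × ℕ∞ :=
  (exists_surjective_nat (List EOP × ℕ∞)).choose

lemma tasks_surj : Function.Surjective tasks := (exists_surjective_nat _).choose_spec

noncomputable def taskFun (l : List EOP) : ℕ → EOP := fun j => l.getD j ((0:ℕ∞), (0:ℕ∞))

open Classical in
noncomputable def stepD (m : ℕ) (d : ℕ → ℕ → EOP) : ℕ → ℕ → EOP :=
  if (tasks (Nat.unpair m).2).1.length ≤ m ∧
      ExtCompat d (· ∈ Finset.range (tasks (Nat.unpair m).2).1.length)
        (taskFun (tasks (Nat.unpair m).2).1) (tasks (Nat.unpair m).2).2 then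
    addPt d m (glue d (Finset.range (tasks (Nat.unpair m).2).1.length)
      (taskFun (tasks (Nat.unpair m).2).1)) (tasks (Nat.unpair m).2).2
  else addPt d m (glue d (∅ : Finset ℕ) (taskFun (tasks (Nat.unpair m).2).1)) 1

noncomputable def DD : ℕ → ℕ → ℕ → EOP :=
  fun m => Nat.rec (fun _ _ => (((0:ℕ∞), (1:ℕ∞)) : EOP)) (fun m d => stepD m d) m

lemma DD_succ (m : ℕ) : DD (m + 1) = stepD m (DD m) := rfl

lemma stepD_shape (m : ℕ) (d : ℕ → ℕ → EOP) : ∃ G c, stepD m d = addPt d m G c := by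
  unfold stepD
  split
  · exact ⟨_, _, rfl⟩
  · exact ⟨_, _, rfl⟩

lemma DD_step_agree (m : ℕ) {i j : ℕ} (hi : i < m) (hj : j < m) :
    DD (m + 1) i j = DD m i j := by
  obtain ⟨G, c, hGc⟩ := stepD_shape m (DD m)
  rw [DD_succ, hGc, addPt_old hi.ne hj.ne]

lemma DD_agree : ∀ {m m' : ℕ}, m ≤ m' → ∀ {i j : ℕ}, i < m → j < m → DD m' i j = DD m i j := by
  intro m m' h
  induction m' , h using Nat.le_induction with
  | base => intro i j _ _; rfl
  | succ k hk ih =>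
      intro i j hi hj
      rw [DD_step_agree k (lt_of_lt_of_le hi hk) (lt_of_lt_of_le hj hk)]
      exact ih hi hj

lemma ext_empty {D : ℕ → ℕ → EOP} {g : ℕ → EOP} : ExtCompat D (· ∈ (∅ : Finset ℕ)) g 1 :=
  ⟨OdE.one, by simp, by simp, by simp, by simp, by simp, by simp⟩

lemma DD_metric : ∀ m, EOMOn (DD m) (· < m) := by
  intro m
  induction m with
  | zero =>
      exact ⟨fun x hx => absurd hx (Nat.not_lt_zero x), fun x hx => absurd hx (Nat.not_lt_zero x),
        fun x hx => absurd hx (Nat.not_lt_zero x), fun x hx => absurd hx (Nat.not_lt_zero x)⟩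
  | succ m ih =>
      rw [DD_succ]
      unfold stepD
      split
      · next h =>
          refine addPt_metric ih (amalg ih (fun a ha => ?_) h.2)
          have := Finset.mem_range.mp ha
          omega
      · exact addPt_metric ih (amalg ih (by simp) ext_empty)

noncomputable def DU : ℕ → ℕ → EOP := fun i j => DD (max i j + 1) i j

lemma DU_eq {m i j : ℕ} (hi : i < m) (hj : j < m) : DU i j = DD m i j := by
  have h1 : max i j + 1 ≤ m := by omega
  have h2 : i < max i j + 1 := by omega
  have h3 : j < max i j + 1 := by omega
  rw [DU, DD_agree h1 h2 h3]

lemma DU_metric : IsEOMetric ℕ DU := by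
  constructor
  · intro x y
    rw [DU_eq (m := max x y + 1) (by omega) (by omega)]
    exact (DD_metric _).isEO x (by omega) y (by omega)
  · intro x y
    rw [DU_eq (m := max x y + 1) (by omega) (by omega)]
    exact (DD_metric _).fst x (by omega) y (by omega)
  · intro x y
    rw [DU_eq (m := max x y + 1) (by omega) (by omega),
      DU_eq (m := max x y + 1) (by omega) (by omega)]
    exact (DD_metric _).symm x (by omega) y (by omega)
  · intro x y z
    rw [eoLe_iff]
    have m := max x (max y z) + 1
    rw [DU_eq (m := max x (max y z) + 1) (by omega) (by omega),
      DU_eq (m := max x (max y z) + 1) (by omega) (by omega),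
      DU_eq (m := max x (max y z) + 1) (by omega) (by omega)]
    exact (DD_metric _).tri x (by omega) y (by omega) z (by omega)

lemma DU_EOMOn : EOMOn DU (fun _ => True) :=
  ⟨fun x _ y _ => DU_metric.isEO x y, fun x _ y _ => DU_metric.fst_eq_zero_iff x y,
    fun x _ y _ => DU_metric.symm x y,
    fun x _ y _ z _ => eoLe_iff.mp (DU_metric.triangle x y z)⟩

/-- the key genericity property of `DU` -/
lemma generic {A : Finset ℕ} {g : ℕ → EOP} {c : ℕ∞}
    (hg : ExtCompat DU (· ∈ A) g c) :
    ∃ u : ℕ, DU u u = ((0:ℕ∞), c) ∧ ∀ a ∈ A, DU u a = g a ∧ DU a u = g a := by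
  classical
  set G := glue DU A g with hGdef
  have hG : ExtCompat DU (fun _ => True) G c := amalg DU_EOMOn (fun a _ => trivial) hg
  set n := A.sup id + 1 with hn_def
  have hAn : ∀ a ∈ A, a < n := by
    intro a ha
    have := Finset.le_sup (f := id) ha
    simp only [id] at this
    omega
  set l : List EOP := List.ofFn (fun i : Fin n => G i) with hl
  obtain ⟨s, hs⟩ := tasks_surj (l, c)
  set m := Nat.pair n s with hm
  have hmn : n ≤ m := Nat.left_le_pair n s
  have hups : (Nat.unpair m).2 = s := by rw [hm, Nat.unpair_pair]
  have hlen : l.length = n := by simp [hl, hn_def]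
  have hg' : ∀ j < n, taskFun l j = G j := by
    intro j hj
    have hj' : j < l.length := by omega
    simp only [taskFun]
    rw [List.getD_eq_getElem (hn := hj')]
    simp only [hl, List.getElem_ofFn]
  -- the condition of stepD holds at m
  have extc : ExtCompat (DD m) (· ∈ Finset.range n) (taskFun l) c := by
    have hmem : ∀ a ∈ Finset.range n, a < m := by
      intro a ha; have := Finset.mem_range.mp ha; omega
    constructor
    · exact hG.codd
    · intro a ha; rw [hg' a (Finset.mem_range.mp ha)]; exact hG.iseo a trivial
    · intro a ha; rw [hg' a (Finset.mem_range.mp ha)]; exact hG.gne a trivial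
    · intro a ha b hb
      rw [hg' a (Finset.mem_range.mp ha), hg' b (Finset.mem_range.mp hb),
        ← DU_eq (hmem a ha) (hmem b hb)]
      exact hG.t1 a trivial b trivial
    · intro a ha b hb
      rw [hg' a (Finset.mem_range.mp ha), hg' b (Finset.mem_range.mp hb),
        ← DU_eq (hmem a ha) (hmem b hb)]
      exact hG.t2 a trivial b trivial
    · intro a ha; rw [hg' a (Finset.mem_range.mp ha)]; exact hG.t3 a trivial
    · intro a ha; rw [hg' a (Finset.mem_range.mp ha)]; exact hG.t4 a trivial
  have key : DD (m + 1) = addPt (DD m) m (glue (DD m) (Finset.range n) (taskFun l)) c := by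
    rw [DD_succ]
    unfold stepD
    rw [hups, hs]
    simp only [hlen]
    rw [if_pos ⟨hmn, extc⟩]
  refine ⟨m, ?_, ?_⟩
  · rw [DU_eq (m := m + 1) (by omega) (by omega), key, addPt_mm]
  · intro a ha
    have ham : a < m := lt_of_lt_of_le (hAn a ha) hmn
    have h1 : DU m a = g a := by
      rw [DU_eq (m := m + 1) (by omega) (by omega), key, addPt_mj ham.ne,
        glue, if_pos (Finset.mem_range.mpr (hAn a ha)), hg' a (hAn a ha), hGdef,
        glue_mem ha]
    exact ⟨h1, by rw [DU_metric.symm a m]; exact h1⟩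

/-! ### partial isometries and back-and-forth -/

def good (s : Finset ℕ) (σ : ℕ → ℕ) : Prop :=
  ∀ a ∈ s, ∀ b ∈ s, DU (σ a) (σ b) = DU a b

lemma DU_fst0 (k : ℕ) : (DU k k).1 = 0 := (DU_metric.fst_eq_zero_iff k k).mpr rfl

lemma DU_self_pair (k : ℕ) : DU k k = ((0:ℕ∞), (DU k k).2) :=
  Prod.ext_iff.mpr ⟨DU_fst0 k, rfl⟩

lemma DU_tri (x y z : ℕ) : DU x z ≤ eoAdd (DU x y) (DU y z) :=
  eoLe_iff.mp (DU_metric.triangle x y z)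

lemma forth {s : Finset ℕ} {σ : ℕ → ℕ} (hσ : good s σ) (k : ℕ) :
    ∃ (s' : Finset ℕ) (σ' : ℕ → ℕ),
      s ⊆ s' ∧ (∀ a ∈ s, σ' a = σ a) ∧ good s' σ' ∧ k ∈ s' := by
  classical
  by_cases hk : k ∈ s
  · exact ⟨s, σ, subset_rfl, fun a _ => rfl, hσ, hk⟩
  have hinj : ∀ a ∈ s, ∀ b ∈ s, σ a = σ b → a = b := by
    intro a ha b hb hab
    have h1 := hσ a ha b hb
    rw [hab] at h1
    have h0 : (DU a b).1 = 0 := by rw [← h1]; exact DU_fst0 (σ b)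
    exact (DU_metric.fst_eq_zero_iff a b).mp h0
  set γ : ℕ → EOP := fun v => DU k (Function.invFunOn σ ↑s v) with hγdef
  have hγ : ∀ a ∈ s, γ (σ a) = DU k a := by
    intro a ha
    have hex : ∃ x ∈ (↑s : Set ℕ), σ x = σ a := ⟨a, ha, rfl⟩
    have h1 : Function.invFunOn σ ↑s (σ a) ∈ (↑s : Set ℕ) := Function.invFunOn_mem hex
    have h2 : σ (Function.invFunOn σ ↑s (σ a)) = σ a := Function.invFunOn_eq hex
    have h3 := hinj _ h1 a ha h2
    rw [hγdef]
    simp only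
    rw [h3]
  set c := (DU k k).2 with hc
  have hext : ExtCompat DU (· ∈ s.image σ) γ c := by
    constructor
    · exact (DU_metric.isEO k k).2
    · intro v hv
      obtain ⟨a, ha, rfl⟩ := Finset.mem_image.mp hv
      rw [hγ a ha]; exact DU_metric.isEO k a
    · intro v hv
      obtain ⟨a, ha, rfl⟩ := Finset.mem_image.mp hv
      rw [hγ a ha]
      intro h0
      exact hk (((DU_metric.fst_eq_zero_iff k a).mp h0) ▸ ha)
    · intro v hv w hw
      obtain ⟨a, ha, rfl⟩ := Finset.mem_image.mp hv
      obtain ⟨b, hb, rfl⟩ := Finset.mem_image.mp hw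
      rw [hγ a ha, hγ b hb, hσ a ha b hb]
      calc DU a b ≤ eoAdd (DU a k) (DU k b) := DU_tri a k b
        _ = eoAdd (DU k a) (DU k b) := by rw [DU_metric.symm a k]
    · intro v hv w hw
      obtain ⟨a, ha, rfl⟩ := Finset.mem_image.mp hv
      obtain ⟨b, hb, rfl⟩ := Finset.mem_image.mp hw
      rw [hγ a ha, hγ b hb, hσ a ha b hb]
      exact DU_tri k a b
    · intro v hv
      obtain ⟨a, ha, rfl⟩ := Finset.mem_image.mp hv
      rw [hγ a ha, hc, ← DU_self_pair k]
      calc DU k k ≤ eoAdd (DU k a) (DU a k) := DU_tri k a k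
        _ = eoAdd (DU k a) (DU k a) := by rw [DU_metric.symm a k]
    · intro v hv
      obtain ⟨a, ha, rfl⟩ := Finset.mem_image.mp hv
      rw [hγ a ha, hc, ← DU_self_pair k]
      exact DU_tri k k a
  obtain ⟨u, hu1, hu2⟩ := generic hext
  have hne : ∀ a ∈ s, a ≠ k := fun a ha h => hk (h ▸ ha)
  have e1 : DU u u = DU k k := hu1.trans (by rw [hc]; exact (DU_self_pair k).symm)
  have e2 : ∀ b ∈ s, DU u (σ b) = DU k b := fun b hb =>
    (show DU u (σ b) = γ (σ b) from (hu2 (σ b) (Finset.mem_image_of_mem σ hb)).1).trans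
      (hγ b hb)
  have e3 : ∀ b ∈ s, DU (σ b) u = DU b k := fun b hb =>
    ((show DU (σ b) u = γ (σ b) from (hu2 (σ b) (Finset.mem_image_of_mem σ hb)).2).trans
      (hγ b hb)).trans (DU_metric.symm k b)
  refine ⟨insert k s, Function.update σ k u, Finset.subset_insert _ _, ?_, ?_,
    Finset.mem_insert_self _ _⟩
  · intro a ha
    exact Function.update_of_ne (hne a ha) _ _
  · intro a ha b hb
    rcases Finset.mem_insert.mp ha with ha1 | ha' <;>
      rcases Finset.mem_insert.mp hb with hb1 | hb'
    · subst ha1; subst hb1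
      rw [Function.update_self]
      exact e1
    · subst ha1
      rw [Function.update_self, Function.update_of_ne (hne b hb') _ _]
      exact e2 b hb'
    · subst hb1
      rw [Function.update_self, Function.update_of_ne (hne a ha') _ _]
      exact e3 a ha'
    · rw [Function.update_of_ne (hne a ha') _ _, Function.update_of_ne (hne b hb') _ _]
      exact hσ a ha' b hb'

lemma back {s : Finset ℕ} {σ : ℕ → ℕ} (hσ : good s σ) (k : ℕ) :
    ∃ (s' : Finset ℕ) (σ' : ℕ → ℕ),
      s ⊆ s' ∧ (∀ a ∈ s, σ' a = σ a) ∧ good s' σ' ∧ ∃ a ∈ s', σ' a = k := by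
  classical
  by_cases hk : ∃ a ∈ s, σ a = k
  · exact ⟨s, σ, subset_rfl, fun a _ => rfl, hσ, hk⟩
  push_neg at hk
  set γ : ℕ → EOP := fun a => DU k (σ a) with hγdef
  set c := (DU k k).2 with hc
  have hext : ExtCompat DU (· ∈ s) γ c := by
    constructor
    · exact (DU_metric.isEO k k).2
    · intro a _; exact DU_metric.isEO k (σ a)
    · intro a ha
      intro h0
      exact hk a ha ((DU_metric.fst_eq_zero_iff k (σ a)).mp h0).symm
    · intro a ha b hb
      rw [← hσ a ha b hb]
      calc DU (σ a) (σ b) ≤ eoAdd (DU (σ a) k) (DU k (σ b)) := DU_tri _ k _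
        _ = eoAdd (DU k (σ a)) (DU k (σ b)) := by rw [DU_metric.symm (σ a) k]
    · intro a ha b hb
      rw [← hσ a ha b hb]
      exact DU_tri k (σ a) (σ b)
    · intro a ha
      rw [hc, ← DU_self_pair k]
      calc DU k k ≤ eoAdd (DU k (σ a)) (DU (σ a) k) := DU_tri k (σ a) k
        _ = eoAdd (DU k (σ a)) (DU k (σ a)) := by rw [DU_metric.symm (σ a) k]
    · intro a ha
      rw [hc, ← DU_self_pair k]
      exact DU_tri k k (σ a)
  obtain ⟨u, hu1, hu2⟩ := generic hext
  have hus : u ∉ s := by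
    intro hus
    have h2 : DU u u = DU k (σ u) := (hu2 u hus).1
    rw [hu1] at h2
    have h0 : (DU k (σ u)).1 = 0 := by rw [← h2]
    exact hk u hus ((DU_metric.fst_eq_zero_iff k (σ u)).mp h0).symm
  have hne : ∀ a ∈ s, a ≠ u := fun a ha h => hus (h ▸ ha)
  have e1 : DU u u = DU k k := hu1.trans (by rw [hc]; exact (DU_self_pair k).symm)
  have e2 : ∀ b ∈ s, DU u b = DU k (σ b) := fun b hb => (hu2 b hb).1
  have e3 : ∀ b ∈ s, DU b u = DU (σ b) k := fun b hb =>
    ((hu2 b hb).2 : DU b u = DU k (σ b)).trans (DU_metric.symm k (σ b))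
  refine ⟨insert u s, Function.update σ u k, Finset.subset_insert _ _, ?_, ?_,
    ⟨u, Finset.mem_insert_self _ _, Function.update_self _ _ _⟩⟩
  · intro a ha
    exact Function.update_of_ne (hne a ha) _ _
  · intro a ha b hb
    rcases Finset.mem_insert.mp ha with ha1 | ha' <;>
      rcases Finset.mem_insert.mp hb with hb1 | hb'
    · subst ha1; subst hb1
      rw [Function.update_self]
      exact e1.symm
    · subst ha1
      rw [Function.update_self, Function.update_of_ne (hne b hb') _ _]
      exact (e2 b hb').symm
    · subst hb1
      rw [Function.update_self, Function.update_of_ne (hne a ha') _ _]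
      exact (e3 a ha').symm
    · rw [Function.update_of_ne (hne a ha') _ _, Function.update_of_ne (hne b hb') _ _]
      exact hσ a ha' b hb'

/-! ### chains of partial isometries -/

lemma step_exists (p : Finset ℕ × (ℕ → ℕ)) (hp : good p.1 p.2) (k : ℕ) :
    ∃ q : Finset ℕ × (ℕ → ℕ), good q.1 q.2 ∧ p.1 ⊆ q.1 ∧ (∀ a ∈ p.1, q.2 a = p.2 a) ∧
      k ∈ q.1 ∧ ∃ a ∈ q.1, q.2 a = k := by
  obtain ⟨s1, σ1, hsub1, hag1, hg1, hk1⟩ := forth hp k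
  obtain ⟨s2, σ2, hsub2, hag2, hg2, hex2⟩ := back hg1 k
  exact ⟨(s2, σ2), hg2, hsub1.trans hsub2,
    fun a ha => (hag2 a (hsub1 ha)).trans (hag1 a ha), hsub2 hk1, hex2⟩

noncomputable def chain (p0 : {p : Finset ℕ × (ℕ → ℕ) // good p.1 p.2}) :
    ℕ → {p : Finset ℕ × (ℕ → ℕ) // good p.1 p.2} :=
  fun k => Nat.rec p0
    (fun k q => ⟨(step_exists q.1 q.2 k).choose, (step_exists q.1 q.2 k).choose_spec.1⟩) k

section chainprops

variable (p0 : {p : Finset ℕ × (ℕ → ℕ) // good p.1 p.2})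

lemma chain_zero : chain p0 0 = p0 := rfl

lemma chain_spec (k : ℕ) :
    (chain p0 k).1.1 ⊆ (chain p0 (k+1)).1.1 ∧
    (∀ a ∈ (chain p0 k).1.1, (chain p0 (k+1)).1.2 a = (chain p0 k).1.2 a) ∧
    k ∈ (chain p0 (k+1)).1.1 ∧ ∃ a ∈ (chain p0 (k+1)).1.1, (chain p0 (k+1)).1.2 a = k := by
  have h := (step_exists (chain p0 k).1 (chain p0 k).2 k).choose_spec
  exact ⟨h.2.1, h.2.2.1, h.2.2.2⟩

lemma chain_mono : ∀ {k k' : ℕ}, k ≤ k' → (chain p0 k).1.1 ⊆ (chain p0 k').1.1 := by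
  intro k k' h
  induction k', h using Nat.le_induction with
  | base => exact subset_rfl
  | succ n hn ih => exact ih.trans (chain_spec p0 n).1

lemma chain_stable : ∀ {k k' : ℕ}, k ≤ k' → ∀ a ∈ (chain p0 k).1.1,
    (chain p0 k').1.2 a = (chain p0 k).1.2 a := by
  intro k k' h
  induction k', h using Nat.le_induction with
  | base => exact fun a _ => rfl
  | succ n hn ih =>
      intro a ha
      rw [(chain_spec p0 n).2.1 a (chain_mono p0 hn ha)]
      exact ih a ha

noncomputable def Φf : ℕ → ℕ := fun x => (chain p0 (x+1)).1.2 x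

lemma Φf_eq {x k : ℕ} (hx : x ∈ (chain p0 k).1.1) : Φf p0 x = (chain p0 k).1.2 x := by
  have hx1 : x ∈ (chain p0 (x+1)).1.1 := (chain_spec p0 x).2.2.1
  have h1 : (chain p0 (max (x+1) k)).1.2 x = (chain p0 (x+1)).1.2 x :=
    chain_stable p0 (le_max_left _ _) x hx1
  have h2 : (chain p0 (max (x+1) k)).1.2 x = (chain p0 k).1.2 x :=
    chain_stable p0 (le_max_right _ _) x hx
  rw [Φf, ← h1, h2]

lemma Φf_iso (x y : ℕ) : DU (Φf p0 x) (Φf p0 y) = DU x y := by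
  set k := max x y + 1 with hk
  have hx : x ∈ (chain p0 k).1.1 :=
    chain_mono p0 (by omega) (chain_spec p0 x).2.2.1
  have hy : y ∈ (chain p0 k).1.1 :=
    chain_mono p0 (by omega) (chain_spec p0 y).2.2.1
  rw [Φf_eq p0 hx, Φf_eq p0 hy]
  exact (chain p0 k).2 x hx y hy

lemma Φf_bij : Function.Bijective (Φf p0) := by
  constructor
  · intro x y hxy
    have h := Φf_iso p0 x y
    rw [hxy] at h
    have h0 : (DU x y).1 = 0 := by rw [← h]; exact DU_fst0 _
    exact (DU_metric.fst_eq_zero_iff x y).mp h0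
  · intro y
    obtain ⟨a, ha, hay⟩ := (chain_spec p0 y).2.2.2
    exact ⟨a, (Φf_eq p0 ha).trans hay⟩

end chainprops

/-! ### universality -/

lemma universality (S : Type u) (dS : S → S → EOP) (hc : Countable S) (hm : IsEOMetric S dS) :
    ∃ f : S → ℕ, Function.Injective f ∧ ∀ x y : S, DU (f x) (f y) = dS x y := by
  classical
  rcases isEmpty_or_nonempty S with hS | hS
  · exact ⟨fun s => isEmptyElim s, fun s => isEmptyElim s, fun s => isEmptyElim s⟩
  obtain ⟨e, he⟩ := exists_surjective_nat S
  have tS : ∀ x y z : S, dS x z ≤ eoAdd (dS x y) (dS y z) :=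
    fun x y z => eoLe_iff.mp (hm.triangle x y z)
  -- one-step extension
  have step : ∀ (k : ℕ) (F : ℕ → ℕ), (∀ i < k, ∀ j < k, DU (F i) (F j) = dS (e i) (e j)) →
      ∃ F' : ℕ → ℕ, (∀ i < k, F' i = F i) ∧
        (∀ i < k + 1, ∀ j < k + 1, DU (F' i) (F' j) = dS (e i) (e j)) := by
    intro k F hF
    by_cases hdup : ∃ i, i < k ∧ e i = e k
    · obtain ⟨i0, hi0, hei⟩ := hdup
      refine ⟨Function.update F k (F i0), fun i hi => Function.update_of_ne hi.ne _ _, ?_⟩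
      intro i hi j hj
      rcases Nat.lt_succ_iff_lt_or_eq.mp hi with hi' | rfl <;>
        rcases Nat.lt_succ_iff_lt_or_eq.mp hj with hj' | rfl
      · rw [Function.update_of_ne hi'.ne _ _, Function.update_of_ne hj'.ne _ _]
        exact hF i hi' j hj'
      · rw [Function.update_of_ne hi'.ne _ _, Function.update_self, ← hei]
        exact hF i hi' i0 hi0
      · rw [Function.update_of_ne hj'.ne _ _, Function.update_self, ← hei]
        exact hF i0 hi0 j hj'
      · rw [Function.update_self, ← hei]
        exact hF i0 hi0 i0 hi0
    · push_neg at hdup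
      set A : Finset ℕ := (Finset.range k).image F with hA
      set γ : ℕ → EOP :=
        fun v => dS (e k) (e (Function.invFunOn F ↑(Finset.range k) v)) with hγdef
      have hγ : ∀ j, j < k → γ (F j) = dS (e k) (e j) := by
        intro j hj
        have hex : ∃ x ∈ (↑(Finset.range k) : Set ℕ), F x = F j :=
          ⟨j, by simp [hj], rfl⟩
        have h1 := Function.invFunOn_mem hex
        have h2 := Function.invFunOn_eq hex
        set i := Function.invFunOn F ↑(Finset.range k) (F j) with hi
        have hik : i < k := by simpa using h1
        have heij : e i = e j := by
          have h3 := hF i hik j hj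
          rw [h2] at h3
          have h0 : (dS (e i) (e j)).1 = 0 := by rw [← h3]; exact DU_fst0 _
          exact (hm.fst_eq_zero_iff (e i) (e j)).mp h0
        rw [hγdef]
        simp only
        rw [← hi, heij]
      have hckk : dS (e k) (e k) = ((0:ℕ∞), (dS (e k) (e k)).2) :=
        Prod.ext_iff.mpr ⟨(hm.fst_eq_zero_iff _ _).mpr rfl, rfl⟩
      have hext : ExtCompat DU (· ∈ A) γ (dS (e k) (e k)).2 := by
        constructor
        · exact (hm.isEO (e k) (e k)).2
        · intro v hv
          obtain ⟨j, hj, rfl⟩ := Finset.mem_image.mp hv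
          rw [hγ j (Finset.mem_range.mp hj)]
          exact hm.isEO _ _
        · intro v hv
          obtain ⟨j, hj, rfl⟩ := Finset.mem_image.mp hv
          rw [hγ j (Finset.mem_range.mp hj)]
          intro h0
          exact hdup j (Finset.mem_range.mp hj)
            ((hm.fst_eq_zero_iff _ _).mp h0).symm
        · intro v hv w hw
          obtain ⟨i, hi, rfl⟩ := Finset.mem_image.mp hv
          obtain ⟨j, hj, rfl⟩ := Finset.mem_image.mp hw
          rw [hγ i (Finset.mem_range.mp hi), hγ j (Finset.mem_range.mp hj),
            hF i (Finset.mem_range.mp hi) j (Finset.mem_range.mp hj)]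
          calc dS (e i) (e j) ≤ eoAdd (dS (e i) (e k)) (dS (e k) (e j)) := tS _ _ _
            _ = eoAdd (dS (e k) (e i)) (dS (e k) (e j)) := by rw [hm.symm (e i) (e k)]
        · intro v hv w hw
          obtain ⟨i, hi, rfl⟩ := Finset.mem_image.mp hv
          obtain ⟨j, hj, rfl⟩ := Finset.mem_image.mp hw
          rw [hγ i (Finset.mem_range.mp hi), hγ j (Finset.mem_range.mp hj),
            hF i (Finset.mem_range.mp hi) j (Finset.mem_range.mp hj)]
          exact tS _ _ _
        · intro v hv
          obtain ⟨i, hi, rfl⟩ := Finset.mem_image.mp hv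
          rw [hγ i (Finset.mem_range.mp hi), ← hckk]
          calc dS (e k) (e k) ≤ eoAdd (dS (e k) (e i)) (dS (e i) (e k)) := tS _ _ _
            _ = eoAdd (dS (e k) (e i)) (dS (e k) (e i)) := by rw [hm.symm (e i) (e k)]
        · intro v hv
          obtain ⟨i, hi, rfl⟩ := Finset.mem_image.mp hv
          rw [hγ i (Finset.mem_range.mp hi), ← hckk]
          exact tS _ _ _
      obtain ⟨u, hu1, hu2⟩ := generic hext
      have e2 : ∀ j, j < k → DU u (F j) = dS (e k) (e j) := by
        intro j hj
        have hmem : F j ∈ A := Finset.mem_image_of_mem F (Finset.mem_range.mpr hj)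
        exact ((hu2 (F j) hmem).1).trans (hγ j hj)
      have e3 : ∀ j, j < k → DU (F j) u = dS (e j) (e k) := by
        intro j hj
        have hmem : F j ∈ A := Finset.mem_image_of_mem F (Finset.mem_range.mpr hj)
        exact (((hu2 (F j) hmem).2).trans (hγ j hj)).trans (hm.symm (e k) (e j))
      refine ⟨Function.update F k u, fun i hi => Function.update_of_ne hi.ne _ _, ?_⟩
      intro i hi j hj
      rcases Nat.lt_succ_iff_lt_or_eq.mp hi with hi' | rfl <;>
        rcases Nat.lt_succ_iff_lt_or_eq.mp hj with hj' | rfl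
      · rw [Function.update_of_ne hi'.ne _ _, Function.update_of_ne hj'.ne _ _]
        exact hF i hi' j hj'
      · rw [Function.update_of_ne hi'.ne _ _, Function.update_self]
        exact e3 i hi'
      · rw [Function.update_of_ne hj'.ne _ _, Function.update_self]
        exact e2 j hj'
      · rw [Function.update_self, hu1, ← hckk]
  -- build the chain of maps
  let CF : (k : ℕ) → {F : ℕ → ℕ // ∀ i < k, ∀ j < k, DU (F i) (F j) = dS (e i) (e j)} :=
    fun k => Nat.rec ⟨fun _ => 0, fun i hi => absurd hi (Nat.not_lt_zero i)⟩
      (fun k q => ⟨(step k q.1 q.2).choose, (step k q.1 q.2).choose_spec.2⟩) k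
  have CF_stable : ∀ {k k' : ℕ}, k ≤ k' → ∀ i < k, (CF k').1 i = (CF k).1 i := by
    intro k k' h
    induction k', h using Nat.le_induction with
    | base => exact fun i _ => rfl
    | succ n hn ih =>
        intro i hi
        have : (CF (n+1)).1 i = (CF n).1 i :=
          (step n (CF n).1 (CF n).2).choose_spec.1 i (lt_of_lt_of_le hi hn)
        rw [this]
        exact ih i hi
  set Fω : ℕ → ℕ := fun i => (CF (i+1)).1 i with hFω
  have key : ∀ i j : ℕ, DU (Fω i) (Fω j) = dS (e i) (e j) := by
    intro i j
    set k := max i j + 1 with hk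
    have h1 : Fω i = (CF k).1 i := (CF_stable (k' := k) (by omega) i (by omega)).symm
    have h2 : Fω j = (CF k).1 j := (CF_stable (k' := k) (by omega) j (by omega)).symm
    rw [h1, h2]
    exact (CF k).2 i (by omega) j (by omega)
  refine ⟨fun s => Fω (Function.surjInv he s), ?_, ?_⟩
  · intro s t hst
    have h := key (Function.surjInv he s) (Function.surjInv he t)
    rw [Function.surjInv_eq he s, Function.surjInv_eq he t] at h
    have hst' : Fω (Function.surjInv he s) = Fω (Function.surjInv he t) := hst
    rw [hst'] at h
    have h0 : (dS s t).1 = 0 := by rw [← h]; exact DU_fst0 _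
    exact (hm.fst_eq_zero_iff s t).mp h0
  · intro s t
    have h := key (Function.surjInv he s) (Function.surjInv he t)
    rwa [Function.surjInv_eq he s, Function.surjInv_eq he t] at h

/-- There exists a generic even-odd metric space: countable, universal for countable
even-odd metric spaces, and ultrahomogeneous. -/
theorem exists_generic_evenOdd_metric_space :
    ∃ (U : Type) (dU : U → U → ℕ∞ × ℕ∞),
      Countable U ∧ Nonempty U ∧ IsEOMetric U dU ∧
      (∀ (S : Type u) (dS : S → S → ℕ∞ × ℕ∞), Countable S → IsEOMetric S dS →
        ∃ f : S → U, Function.Injective f ∧ ∀ x y : S, dU (f x) (f y) = dS x y) ∧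
      ∀ (A B : Finset U) (e : (A : Set U) ≃ (B : Set U)),
        (∀ x y : (A : Set U), dU ((e x : U)) ((e y : U)) = dU (x : U) (y : U)) →
        ∃ φ : U ≃ U, (∀ x y : U, dU (φ x) (φ y) = dU x y) ∧
          ∀ x : (A : Set U), φ (x : U) = ((e x) : U) := by
  classical
  refine ⟨ℕ, DU, inferInstance, inferInstance, DU_metric,
    fun S dS hc hm => universality S dS hc hm, ?_⟩
  intro A B e he
  set σ : ℕ → ℕ :=
    fun x => if h : x ∈ A then ((e ⟨x, h⟩ : (↑B : Set ℕ)) : ℕ) else x with hσdef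
  have hgood : good A σ := by
    intro a ha b hb
    have h1 : σ a = ((e ⟨a, ha⟩ : (↑B : Set ℕ)) : ℕ) := dif_pos ha
    have h2 : σ b = ((e ⟨b, hb⟩ : (↑B : Set ℕ)) : ℕ) := dif_pos hb
    rw [h1, h2]
    exact he ⟨a, ha⟩ ⟨b, hb⟩
  set p0 : {p : Finset ℕ × (ℕ → ℕ) // good p.1 p.2} := ⟨(A, σ), hgood⟩ with hp0
  refine ⟨Equiv.ofBijective (Φf p0) (Φf_bij p0), fun x y => Φf_iso p0 x y, ?_⟩
  intro x
  have hxA : (x : ℕ) ∈ A := x.2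
  have h1 : Φf p0 (x : ℕ) = σ (x : ℕ) := Φf_eq p0 (k := 0) hxA
  show Φf p0 (x : ℕ) = _
  rw [h1, hσdef]
  simp only
  rw [dif_pos hxA]
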